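/- Let A ∈ ℂ^{n×n} and ε ∈ (0,1). Let B̄ ∈ ℂ^{n×d} have full column rank with σ_min(B̄) ≥ 1/(1+ε) and σ_max(B̄) ≤ 1/(1−ε), and let Q ∈ ℂ^{n×d} have orthonormal columns with the same column span as B̄. Let S ∈ ℂ^{s×n} be a subspace embedding with distortion ε for the column span of [AB̄, B̄], and suppose SB̄ has full column rank. Set M̄⋆ = (B̄*B̄)⁻¹B̄*(A·B̄) and M̄ = ((SB̄)*(SB̄))⁻¹(SB̄)*(S·A·B̄). Then ‖M̄ − M̄⋆‖_F ≤ (2(1+ε)/(1−ε)²)·‖(I − QQ*)AQ‖_F. -/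

import Mathlib

open Matrix

noncomputable def nrm2 {n : ℕ} (v : Fin n → ℂ) : ℝ :=
  ‖(WithLp.equiv 2 (Fin n → ℂ)).symm v‖


noncomputable def fnorm {m n : ℕ} (M : Matrix (Fin m) (Fin n) ℂ) : ℝ :=
  Real.sqrt (∑ i, ∑ j, ‖M i j‖ ^ 2)


noncomputable def sigmaMax {n d : ℕ} (M : Matrix (Fin n) (Fin d) ℂ) : ℝ :=
  sSup {r : ℝ | ∃ y : Fin d → ℂ, nrm2 y = 1 ∧ r = nrm2 (M.mulVec y)}

noncomputable def sigmaMin {n d : ℕ} (M : Matrix (Fin n) (Fin d) ℂ) : ℝ :=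
  sInf {r : ℝ | ∃ y : Fin d → ℂ, nrm2 y = 1 ∧ r = nrm2 (M.mulVec y)}

/-! ### Auxiliary lemmas -/

lemma nrm2_eq {n : ℕ} (x : Fin n → ℂ) : nrm2 x = Real.sqrt (∑ i, ‖x i‖^2) := by
  rw [nrm2, EuclideanSpace.norm_eq]; rfl

lemma nrm2_nonneg {n : ℕ} (x : Fin n → ℂ) : 0 ≤ nrm2 x := norm_nonneg _

lemma nrm2_zero {n : ℕ} : nrm2 (0 : Fin n → ℂ) = 0 := by simp [nrm2_eq]

lemma nrm2_sq_eq {n : ℕ} (x : Fin n → ℂ) : (nrm2 x)^2 = ∑ i, ‖x i‖^2 := by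
  rw [nrm2_eq, Real.sq_sqrt (by positivity)]

lemma nrm2_sq {n : ℕ} (x : Fin n → ℂ) :
    (nrm2 x)^2 = (dotProduct (star x) x).re := by
  rw [nrm2_sq_eq]
  simp [dotProduct, Complex.mul_re, Complex.sq_norm,
    Complex.normSq_apply]

lemma nrm2_eq_zero {n : ℕ} {x : Fin n → ℂ} (h : nrm2 x = 0) : x = 0 := by
  have h2 := norm_eq_zero.mp h
  have h3 : (WithLp.equiv 2 (Fin n → ℂ)) ((WithLp.equiv 2 (Fin n → ℂ)).symm x)
      = (WithLp.equiv 2 (Fin n → ℂ)) 0 := by rw [h2]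
  simpa using h3

lemma nrm2_smul {n : ℕ} (c : ℂ) (x : Fin n → ℂ) : nrm2 (c • x) = ‖c‖ * nrm2 x := by
  rw [nrm2, nrm2, ← norm_smul]
  congr 1

lemma dot_cs {n : ℕ} (x y : Fin n → ℂ) :
    ‖dotProduct (star x) y‖ ≤ nrm2 x * nrm2 y := by
  rw [dotProduct_comm]
  exact norm_inner_le_norm (𝕜 := ℂ) ((WithLp.equiv 2 (Fin n → ℂ)).symm x)
    ((WithLp.equiv 2 (Fin n → ℂ)).symm y)

lemma re_dot_le {n : ℕ} (x y : Fin n → ℂ) :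
    (dotProduct (star x) y).re ≤ nrm2 x * nrm2 y :=
  le_trans (Complex.re_le_norm _) (dot_cs x y)

lemma adj_dot {m n : ℕ} (M : Matrix (Fin m) (Fin n) ℂ) (x : Fin m → ℂ) (y : Fin n → ℂ) :
    dotProduct (star (Mᴴ.mulVec x)) y = dotProduct (star x) (M.mulVec y) := by
  rw [Matrix.star_mulVec, Matrix.conjTranspose_conjTranspose, ← dotProduct_mulVec]

lemma dot_star_comm {n : ℕ} (x y : Fin n → ℂ) :
    dotProduct (star x) y = star (dotProduct (star y) x) := by
  simp only [dotProduct, star_sum, star_mul', star_star, Pi.star_apply]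
  exact Finset.sum_congr rfl fun i _ => mul_comm _ _

lemma sq_le_imp {a b : ℝ} (ha : 0 ≤ a) (hb : 0 ≤ b) (h : a^2 ≤ b * a) : a ≤ b := by
  rcases eq_or_lt_of_le ha with h0 | h0
  · linarith
  · nlinarith

lemma le_of_sq_le {a b : ℝ} (hb : 0 ≤ b) (h : a^2 ≤ b^2) (ha : 0 ≤ a) : a ≤ b := by
  nlinarith

lemma proj_contract {n : ℕ} (P : Matrix (Fin n) (Fin n) ℂ) (hH : Pᴴ = P) (hI : P * P = P)
    (w : Fin n → ℂ) : nrm2 (P.mulVec w) ≤ nrm2 w := by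
  apply sq_le_imp (nrm2_nonneg _) (nrm2_nonneg _)
  rw [nrm2_sq]
  calc (dotProduct (star (P.mulVec w)) (P.mulVec w)).re
      = (dotProduct (star w) (P.mulVec w)).re := by
        conv_lhs => rw [show P.mulVec w = Pᴴ.mulVec w by rw [hH], adj_dot,
          Matrix.mulVec_mulVec, hH, hI]
    _ ≤ nrm2 w * nrm2 (P.mulVec w) := re_dot_le _ _

lemma adj_op {m n : ℕ} (C : Matrix (Fin m) (Fin n) ℂ) (κ : ℝ) (hκ : 0 ≤ κ)
    (h : ∀ y, nrm2 (C.mulVec y) ≤ κ * nrm2 y) (x : Fin m → ℂ) :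
    nrm2 (Cᴴ.mulVec x) ≤ κ * nrm2 x := by
  apply sq_le_imp (nrm2_nonneg _) (mul_nonneg hκ (nrm2_nonneg _))
  rw [nrm2_sq]
  calc (dotProduct (star (Cᴴ.mulVec x)) (Cᴴ.mulVec x)).re
      = (dotProduct (star x) (C.mulVec (Cᴴ.mulVec x))).re := by rw [adj_dot]
    _ ≤ nrm2 x * nrm2 (C.mulVec (Cᴴ.mulVec x)) := re_dot_le _ _
    _ ≤ nrm2 x * (κ * nrm2 (Cᴴ.mulVec x)) :=
        mul_le_mul_of_nonneg_left (h _) (nrm2_nonneg _)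
    _ = κ * nrm2 x * nrm2 (Cᴴ.mulVec x) := by ring

lemma fnorm_nonneg {m n : ℕ} (M : Matrix (Fin m) (Fin n) ℂ) : 0 ≤ fnorm M := Real.sqrt_nonneg _

lemma fnorm_sq_eq_cols {m n : ℕ} (M : Matrix (Fin m) (Fin n) ℂ) :
    (fnorm M)^2 = ∑ j, (nrm2 (fun i => M i j))^2 := by
  rw [fnorm, Real.sq_sqrt (by positivity), Finset.sum_comm]
  exact Finset.sum_congr rfl fun j _ => (nrm2_sq_eq _).symm

lemma fnorm_conjTranspose {m n : ℕ} (M : Matrix (Fin m) (Fin n) ℂ) : fnorm Mᴴ = fnorm M := by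
  rw [fnorm, fnorm, Finset.sum_comm]
  congr 1
  apply Finset.sum_congr rfl
  intro i _
  apply Finset.sum_congr rfl
  intro j _
  simp [Matrix.conjTranspose_apply]

lemma fnorm_le_of_cols {m n m' : ℕ} (X : Matrix (Fin m) (Fin n) ℂ) (Y : Matrix (Fin m') (Fin n) ℂ)
    (c : ℝ) (hc : 0 ≤ c)
    (h : ∀ j, nrm2 (fun i => X i j) ≤ c * nrm2 (fun i => Y i j)) : fnorm X ≤ c * fnorm Y := by
  apply le_of_sq_le (mul_nonneg hc (fnorm_nonneg _)) _ (fnorm_nonneg _)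
  rw [mul_pow, fnorm_sq_eq_cols, fnorm_sq_eq_cols, Finset.mul_sum]
  apply Finset.sum_le_sum
  intro j _
  have := h j
  nlinarith [nrm2_nonneg (fun i => X i j), nrm2_nonneg (fun i => Y i j)]

lemma nrm2_mulVec_le_fnorm {m n : ℕ} (M : Matrix (Fin m) (Fin n) ℂ) (y : Fin n → ℂ) :
    nrm2 (M.mulVec y) ≤ fnorm M * nrm2 y := by
  apply le_of_sq_le (mul_nonneg (fnorm_nonneg _) (nrm2_nonneg _)) _ (nrm2_nonneg _)
  rw [mul_pow, nrm2_sq_eq, fnorm, Real.sq_sqrt (by positivity), Finset.sum_mul]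
  apply Finset.sum_le_sum
  intro i _
  have key : ‖M.mulVec y i‖ ≤ Real.sqrt (∑ j, ‖M i j‖^2) * nrm2 y := by
    have h1 : M.mulVec y i = dotProduct (star (star (M i))) y := by
      simp [Matrix.mulVec, dotProduct]
    rw [h1]
    calc ‖dotProduct (star (star (M i))) y‖
        ≤ nrm2 (star (M i)) * nrm2 y := dot_cs _ _
      _ = Real.sqrt (∑ j, ‖M i j‖^2) * nrm2 y := by
          rw [nrm2_eq]
          congr 2
          exact Finset.sum_congr rfl fun j _ => by simp
  have h2 : (0:ℝ) ≤ Real.sqrt (∑ j, ‖M i j‖^2) * nrm2 y :=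
    mul_nonneg (Real.sqrt_nonneg _) (nrm2_nonneg _)
  calc ‖M.mulVec y i‖^2 ≤ (Real.sqrt (∑ j, ‖M i j‖^2) * nrm2 y)^2 := by
        nlinarith [norm_nonneg (M.mulVec y i)]
    _ = (∑ j, ‖M i j‖^2) * (nrm2 y)^2 := by
        rw [mul_pow, Real.sq_sqrt (by positivity)]

lemma mulVec_mem_span {m n : ℕ} (M : Matrix (Fin m) (Fin n) ℂ) (y : Fin n → ℂ) :
    M.mulVec y ∈ Submodule.span ℂ (Set.range Mᵀ) := by
  have h : M.mulVec y = ∑ j, y j • Mᵀ j := by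
    ext i
    simp [Matrix.mulVec, dotProduct, Finset.sum_apply, Matrix.transpose_apply, mul_comm]
  rw [h]
  exact Submodule.sum_mem _ fun j _ =>
    Submodule.smul_mem _ _ (Submodule.subset_span ⟨j, rfl⟩)

lemma fix_span {n : ℕ} (T : Matrix (Fin n) (Fin n) ℂ) (s : Set (Fin n → ℂ))
    (h : ∀ x ∈ s, T.mulVec x = x) :
    ∀ v ∈ Submodule.span ℂ s, T.mulVec v = v := by
  intro v hv
  induction hv using Submodule.span_induction with
  | mem x hx => exact h x hx
  | zero => simp
  | add x y _ _ hx hy => rw [Matrix.mulVec_add, hx, hy]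
  | smul c x _ hx => rw [Matrix.mulVec_smul, hx]

lemma col_of_mul {m n p : ℕ} (X : Matrix (Fin m) (Fin n) ℂ) (Y : Matrix (Fin n) (Fin p) ℂ)
    (j : Fin p) : (fun i => (X * Y) i j) = X.mulVec (fun k => Y k j) := by
  ext i
  simp [Matrix.mul_apply, Matrix.mulVec, dotProduct]

lemma ext_cols {m n : ℕ} {X Y : Matrix (Fin m) (Fin n) ℂ}
    (h : ∀ j, X.mulVec (Pi.single j 1) = Y.mulVec (Pi.single j 1)) : X = Y := by
  ext i j
  have := congrFun (h j) i
  simpa using this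

lemma sigmaMin_pointwise {n d : ℕ} (M : Matrix (Fin n) (Fin d) ℂ) (σ : ℝ) (hσ : 0 ≤ σ)
    (h : σ ≤ sigmaMin M) (y : Fin d → ℂ) : σ * nrm2 y ≤ nrm2 (M.mulVec y) := by
  by_cases hy : y = 0
  · subst hy; simp [Matrix.mulVec_zero, nrm2_zero]
  · have hc : 0 < nrm2 y :=
      lt_of_le_of_ne (nrm2_nonneg y) (fun h' => hy (nrm2_eq_zero h'.symm))
    set c := nrm2 y with hcdef
    have hnormc : ‖((c : ℂ))⁻¹‖ = c⁻¹ := by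
      rw [norm_inv, Complex.norm_real, Real.norm_eq_abs, abs_of_pos hc]
    have hu : nrm2 (((c : ℂ))⁻¹ • y) = 1 := by
      rw [nrm2_smul, hnormc, ← hcdef, inv_mul_cancel₀ (ne_of_gt hc)]
    have hbdd : BddBelow {r : ℝ | ∃ y : Fin d → ℂ, nrm2 y = 1 ∧ r = nrm2 (M.mulVec y)} := by
      refine ⟨0, ?_⟩
      rintro r ⟨z, _, rfl⟩
      exact nrm2_nonneg _
    have h2 : σ ≤ nrm2 (M.mulVec (((c : ℂ))⁻¹ • y)) :=
      le_trans h (csInf_le hbdd ⟨_, hu, rfl⟩)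
    rw [Matrix.mulVec_smul, nrm2_smul, hnormc] at h2
    have := mul_le_mul_of_nonneg_right h2 hc.le
    calc σ * c ≤ c⁻¹ * nrm2 (M.mulVec y) * c := this
      _ = nrm2 (M.mulVec y) := by field_simp

lemma sigmaMax_pointwise {n d : ℕ} (M : Matrix (Fin n) (Fin d) ℂ) (σ : ℝ) (hσ : 0 ≤ σ)
    (h : sigmaMax M ≤ σ) (y : Fin d → ℂ) : nrm2 (M.mulVec y) ≤ σ * nrm2 y := by
  by_cases hy : y = 0
  · subst hy; simp [Matrix.mulVec_zero, nrm2_zero]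
  · have hc : 0 < nrm2 y :=
      lt_of_le_of_ne (nrm2_nonneg y) (fun h' => hy (nrm2_eq_zero h'.symm))
    set c := nrm2 y with hcdef
    have hnormc : ‖((c : ℂ))⁻¹‖ = c⁻¹ := by
      rw [norm_inv, Complex.norm_real, Real.norm_eq_abs, abs_of_pos hc]
    have hu : nrm2 (((c : ℂ))⁻¹ • y) = 1 := by
      rw [nrm2_smul, hnormc, ← hcdef, inv_mul_cancel₀ (ne_of_gt hc)]
    have hbdd : BddAbove {r : ℝ | ∃ y : Fin d → ℂ, nrm2 y = 1 ∧ r = nrm2 (M.mulVec y)} := by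
      refine ⟨fnorm M, ?_⟩
      rintro r ⟨z, hz, rfl⟩
      calc nrm2 (M.mulVec z) ≤ fnorm M * nrm2 z := nrm2_mulVec_le_fnorm _ _
        _ = fnorm M := by rw [hz, mul_one]
    have h2 : nrm2 (M.mulVec (((c : ℂ))⁻¹ • y)) ≤ σ :=
      le_trans (le_csSup hbdd ⟨_, hu, rfl⟩) h
    rw [Matrix.mulVec_smul, nrm2_smul, hnormc] at h2
    have := mul_le_mul_of_nonneg_right h2 hc.le
    calc nrm2 (M.mulVec y) = c⁻¹ * nrm2 (M.mulVec y) * c := by field_simp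
      _ ≤ σ * c := this

lemma star_re (z : ℂ) : (star z).re = z.re := rfl

lemma gram_dot_re {m d : ℕ} (C : Matrix (Fin m) (Fin d) ℂ) (v : Fin d → ℂ) :
    (dotProduct (star v) ((Cᴴ * C).mulVec v)).re = (nrm2 (C.mulVec v))^2 := by
  rw [← Matrix.mulVec_mulVec, dot_star_comm, star_re, adj_dot, ← nrm2_sq]

lemma gram_isUnit_det {m d : ℕ} (C : Matrix (Fin m) (Fin d) ℂ) (σ : ℝ) (hσ : 0 < σ)
    (hl : ∀ y, σ * nrm2 y ≤ nrm2 (C.mulVec y)) : IsUnit (Cᴴ * C).det := by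
  rw [← Matrix.isUnit_iff_isUnit_det]
  rw [← Matrix.mulVec_injective_iff_isUnit]
  intro v w hvw
  have hz : (Cᴴ * C).mulVec (v - w) = 0 := by
    rw [Matrix.mulVec_sub, hvw, sub_self]
  have h0 : (nrm2 (C.mulVec (v - w)))^2 = 0 := by
    rw [← gram_dot_re, hz]
    simp
  have h1 : nrm2 (C.mulVec (v - w)) = 0 := by
    have := nrm2_nonneg (C.mulVec (v - w)); nlinarith
  have h2 := hl (v - w)
  rw [h1] at h2
  have h3 : nrm2 (v - w) = 0 := by
    have := nrm2_nonneg (v - w); nlinarith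
  have := nrm2_eq_zero h3
  exact sub_eq_zero.mp this

lemma proj_herm {m d : ℕ} (C : Matrix (Fin m) (Fin d) ℂ) :
    (C * (Cᴴ * C)⁻¹ * Cᴴ)ᴴ = C * (Cᴴ * C)⁻¹ * Cᴴ := by
  simp [Matrix.conjTranspose_mul, Matrix.conjTranspose_nonsing_inv, Matrix.mul_assoc]

lemma proj_idem {m d : ℕ} (C : Matrix (Fin m) (Fin d) ℂ) (hdet : IsUnit (Cᴴ * C).det) :
    (C * (Cᴴ * C)⁻¹ * Cᴴ) * (C * (Cᴴ * C)⁻¹ * Cᴴ) = C * (Cᴴ * C)⁻¹ * Cᴴ := by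
  have h : Cᴴ * (C * (Cᴴ * C)⁻¹) = 1 := by
    rw [← Matrix.mul_assoc, Matrix.mul_nonsing_inv _ hdet]
  calc (C * (Cᴴ * C)⁻¹ * Cᴴ) * (C * (Cᴴ * C)⁻¹ * Cᴴ)
      = C * (Cᴴ * C)⁻¹ * (Cᴴ * (C * (Cᴴ * C)⁻¹)) * Cᴴ := by
        simp only [Matrix.mul_assoc]
    _ = C * (Cᴴ * C)⁻¹ * Cᴴ := by rw [h, Matrix.mul_one]

lemma pinv_bound {m d : ℕ} (C : Matrix (Fin m) (Fin d) ℂ) (σ : ℝ) (hσ : 0 < σ)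
    (hl : ∀ y, σ * nrm2 y ≤ nrm2 (C.mulVec y)) (hdet : IsUnit (Cᴴ * C).det)
    (w : Fin m → ℂ) :
    nrm2 (((Cᴴ * C)⁻¹ * Cᴴ).mulVec w) ≤ σ⁻¹ * nrm2 w := by
  set z := ((Cᴴ * C)⁻¹ * Cᴴ).mulVec w with hz
  have h1 : C.mulVec z = (C * (Cᴴ * C)⁻¹ * Cᴴ).mulVec w := by
    rw [hz, Matrix.mulVec_mulVec, Matrix.mul_assoc]
  have h2 : nrm2 (C.mulVec z) ≤ nrm2 w := by
    rw [h1]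
    exact proj_contract _ (proj_herm C) (proj_idem C hdet) w
  have h3 := hl z
  have : σ * nrm2 z ≤ nrm2 w := le_trans h3 h2
  calc nrm2 z = σ⁻¹ * (σ * nrm2 z) := by field_simp
    _ ≤ σ⁻¹ * nrm2 w := mul_le_mul_of_nonneg_left this (by positivity)

lemma nrm2_iso {n d : ℕ} (Q : Matrix (Fin n) (Fin d) ℂ) (hQ : Qᴴ * Q = 1) (x : Fin d → ℂ) :
    nrm2 (Q.mulVec x) = nrm2 x := by
  have h : (nrm2 (Q.mulVec x))^2 = (nrm2 x)^2 := by
    have h0 := gram_dot_re Q x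
    rw [hQ, Matrix.one_mulVec, ← nrm2_sq] at h0
    rw [← h0]
  have h1 := nrm2_nonneg (Q.mulVec x)
  have h2 := nrm2_nonneg x
  nlinarith

/-- Backward-stability bound for sketched Rayleigh–Ritz with a whitened basis:
the sRR matrix is close to the RR matrix when range(B̄) is nearly invariant. -/
theorem sRR_close_to_RR_whitened
    {n d s : ℕ} (A : Matrix (Fin n) (Fin n) ℂ) (ε : ℝ) (hε : ε ∈ Set.Ioo (0 : ℝ) 1)
    (Bbar : Matrix (Fin n) (Fin d) ℂ) (hBbar : Bbar.rank = d)
    (hmin : 1 / (1 + ε) ≤ sigmaMin Bbar) (hmax : sigmaMax Bbar ≤ 1 / (1 - ε))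
    (Q : Matrix (Fin n) (Fin d) ℂ) (hQ : Qᴴ * Q = 1)
    (hspan : Submodule.span ℂ (Set.range Qᵀ) = Submodule.span ℂ (Set.range Bbarᵀ))
    (S : Matrix (Fin s) (Fin n) ℂ)
    (hS : ∀ v ∈ Submodule.span ℂ (Set.range (A * Bbar)ᵀ ∪ Set.range Bbarᵀ),
      (1 - ε) * nrm2 v ≤ nrm2 (S.mulVec v) ∧ nrm2 (S.mulVec v) ≤ (1 + ε) * nrm2 v)
    (hSB : (S * Bbar).rank = d) :
    fnorm (((S * Bbar)ᴴ * (S * Bbar))⁻¹ * (S * Bbar)ᴴ * (S * (A * Bbar)) -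
        (Bbarᴴ * Bbar)⁻¹ * Bbarᴴ * (A * Bbar)) ≤
      2 * (1 + ε) / (1 - ε) ^ 2 * fnorm ((1 - Q * Qᴴ) * (A * Q)) := by
  obtain ⟨hε0, hε1⟩ := hε
  have h1me : (0:ℝ) < 1 - ε := by linarith
  have h1pe : (0:ℝ) < 1 + ε := by linarith
  -- pointwise singular value bounds for Bbar
  have hBlow : ∀ y, (1/(1+ε)) * nrm2 y ≤ nrm2 (Bbar.mulVec y) :=
    sigmaMin_pointwise Bbar _ (by positivity) hmin
  have hBhigh : ∀ y, nrm2 (Bbar.mulVec y) ≤ (1/(1-ε)) * nrm2 y :=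
    sigmaMax_pointwise Bbar _ (by positivity) hmax
  -- pointwise lower bound for S * Bbar
  have hSBlow : ∀ y, ((1-ε)/(1+ε)) * nrm2 y ≤ nrm2 ((S * Bbar).mulVec y) := by
    intro y
    have hmem : Bbar.mulVec y ∈
        Submodule.span ℂ (Set.range (A * Bbar)ᵀ ∪ Set.range Bbarᵀ) :=
      Submodule.span_mono Set.subset_union_right (mulVec_mem_span Bbar y)
    have h1 := (hS _ hmem).1
    have h2 := hBlow y
    rw [← Matrix.mulVec_mulVec]
    calc ((1-ε)/(1+ε)) * nrm2 y = (1-ε) * ((1/(1+ε)) * nrm2 y) := by ring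
      _ ≤ (1-ε) * nrm2 (Bbar.mulVec y) := mul_le_mul_of_nonneg_left h2 h1me.le
      _ ≤ nrm2 (S.mulVec (Bbar.mulVec y)) := h1
  -- Gram matrices are invertible
  have hBdet : IsUnit (Bbarᴴ * Bbar).det :=
    gram_isUnit_det Bbar _ (by positivity) hBlow
  have hPdet : IsUnit ((S * Bbar)ᴴ * (S * Bbar)).det :=
    gram_isUnit_det (S * Bbar) _ (by positivity) hSBlow
  -- projector onto span of Q fixes that span
  have hQQfix : ∀ v ∈ Submodule.span ℂ (Set.range Qᵀ), (Q * Qᴴ).mulVec v = v := by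
    apply fix_span
    rintro x ⟨j, rfl⟩
    have hx : Qᵀ j = Q.mulVec (Pi.single j 1) := by
      ext i; simp [Matrix.transpose_apply]
    rw [hx, Matrix.mulVec_mulVec, Matrix.mul_assoc, hQ, Matrix.mul_one]
  -- projector onto span of Bbar fixes that span
  have hPiBfix : ∀ v ∈ Submodule.span ℂ (Set.range Bbarᵀ),
      (Bbar * ((Bbarᴴ * Bbar)⁻¹ * Bbarᴴ)).mulVec v = v := by
    apply fix_span
    rintro x ⟨j, rfl⟩
    have hx : Bbarᵀ j = Bbar.mulVec (Pi.single j 1) := by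
      ext i; simp [Matrix.transpose_apply]
    rw [hx, Matrix.mulVec_mulVec]
    have hM : Bbar * ((Bbarᴴ * Bbar)⁻¹ * Bbarᴴ) * Bbar = Bbar := by
      calc Bbar * ((Bbarᴴ * Bbar)⁻¹ * Bbarᴴ) * Bbar
          = Bbar * ((Bbarᴴ * Bbar)⁻¹ * (Bbarᴴ * Bbar)) := by
            simp only [Matrix.mul_assoc]
        _ = Bbar := by rw [Matrix.nonsing_inv_mul _ hBdet, Matrix.mul_one]
    rw [hM]
  -- the two orthogonal projectors coincide
  have hPiQQ : Bbar * (Bbarᴴ * Bbar)⁻¹ * Bbarᴴ * (Q * Qᴴ) = Q * Qᴴ := by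
    apply ext_cols
    intro j
    rw [← Matrix.mulVec_mulVec]
    have hmem : (Q * Qᴴ).mulVec (Pi.single j 1) ∈ Submodule.span ℂ (Set.range Bbarᵀ) := by
      rw [← hspan, ← Matrix.mulVec_mulVec]
      exact mulVec_mem_span Q _
    have := hPiBfix _ hmem
    rwa [show Bbar * ((Bbarᴴ * Bbar)⁻¹ * Bbarᴴ) = Bbar * (Bbarᴴ * Bbar)⁻¹ * Bbarᴴ by
      rw [Matrix.mul_assoc]] at this
  have hQQPi : (Q * Qᴴ) * (Bbar * (Bbarᴴ * Bbar)⁻¹ * Bbarᴴ)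
      = Bbar * (Bbarᴴ * Bbar)⁻¹ * Bbarᴴ := by
    apply ext_cols
    intro j
    rw [← Matrix.mulVec_mulVec]
    have hmem : (Bbar * (Bbarᴴ * Bbar)⁻¹ * Bbarᴴ).mulVec (Pi.single j 1)
        ∈ Submodule.span ℂ (Set.range Qᵀ) := by
      rw [hspan, show Bbar * (Bbarᴴ * Bbar)⁻¹ * Bbarᴴ
        = Bbar * ((Bbarᴴ * Bbar)⁻¹ * Bbarᴴ) by rw [Matrix.mul_assoc], ← Matrix.mulVec_mulVec]
      exact mulVec_mem_span Bbar _
    exact hQQfix _ hmem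
  have hherm : (Bbar * (Bbarᴴ * Bbar)⁻¹ * Bbarᴴ)ᴴ = Bbar * (Bbarᴴ * Bbar)⁻¹ * Bbarᴴ :=
    proj_herm Bbar
  have hQQherm : (Q * Qᴴ)ᴴ = Q * Qᴴ := by
    rw [Matrix.conjTranspose_mul, Matrix.conjTranspose_conjTranspose]
  have hPiEq : Bbar * (Bbarᴴ * Bbar)⁻¹ * Bbarᴴ = Q * Qᴴ := by
    calc Bbar * (Bbarᴴ * Bbar)⁻¹ * Bbarᴴ
        = (Bbar * (Bbarᴴ * Bbar)⁻¹ * Bbarᴴ)ᴴ := hherm.symm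
      _ = ((Q * Qᴴ) * (Bbar * (Bbarᴴ * Bbar)⁻¹ * Bbarᴴ))ᴴ := by rw [hQQPi]
      _ = (Bbar * (Bbarᴴ * Bbar)⁻¹ * Bbarᴴ)ᴴ * (Q * Qᴴ)ᴴ := Matrix.conjTranspose_mul _ _
      _ = (Bbar * (Bbarᴴ * Bbar)⁻¹ * Bbarᴴ) * (Q * Qᴴ) := by rw [hherm, hQQherm]
      _ = Q * Qᴴ := hPiQQ
  -- Bbar = Q * (Qᴴ * Bbar)
  have hQB : Q * (Qᴴ * Bbar) = Bbar := by
    rw [← Matrix.mul_assoc]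
    apply ext_cols
    intro j
    rw [← Matrix.mulVec_mulVec]
    have hmem : Bbar.mulVec (Pi.single j 1) ∈ Submodule.span ℂ (Set.range Qᵀ) := by
      rw [hspan]; exact mulVec_mem_span Bbar _
    exact hQQfix _ hmem
  -- abbreviations
  set Mstar : Matrix (Fin d) (Fin d) ℂ := (Bbarᴴ * Bbar)⁻¹ * Bbarᴴ * (A * Bbar) with hMstar
  set R : Matrix (Fin n) (Fin d) ℂ := A * Bbar - Bbar * Mstar with hR
  set X : Matrix (Fin n) (Fin d) ℂ := (1 - Q * Qᴴ) * (A * Q) with hX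
  set C : Matrix (Fin s) (Fin d) ℂ := S * Bbar with hC
  -- key identity
  have hkey : (Cᴴ * C)⁻¹ * Cᴴ * (S * (A * Bbar)) - Mstar
      = ((Cᴴ * C)⁻¹ * Cᴴ) * (S * R) := by
    rw [hR, Matrix.mul_sub, Matrix.mul_sub]
    congr 1
    · rw [show S * (Bbar * Mstar) = C * Mstar by rw [hC, ← Matrix.mul_assoc]]
      rw [show (Cᴴ * C)⁻¹ * Cᴴ * (C * Mstar) = (Cᴴ * C)⁻¹ * (Cᴴ * C) * Mstar by
        simp only [Matrix.mul_assoc]]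
      rw [Matrix.nonsing_inv_mul _ hPdet, Matrix.one_mul]
  -- R = X * (Qᴴ * Bbar)
  have hRX : R = X * (Qᴴ * Bbar) := by
    rw [hR, hX]
    have h1 : Bbar * Mstar = (Bbar * (Bbarᴴ * Bbar)⁻¹ * Bbarᴴ) * (A * Bbar) := by
      rw [hMstar]; simp only [Matrix.mul_assoc]
    rw [h1, hPiEq, Matrix.sub_mul, Matrix.one_mul, Matrix.sub_mul]
    have h2 : A * Q * (Qᴴ * Bbar) = A * Bbar := by
      rw [Matrix.mul_assoc, hQB]
    have h3 : Q * Qᴴ * (A * Q) * (Qᴴ * Bbar) = Q * Qᴴ * (A * Bbar) := by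
      rw [Matrix.mul_assoc (Q * Qᴴ), h2]
    rw [h2, h3]
  -- column lemma
  have col_single : ∀ {p q : ℕ} (M : Matrix (Fin p) (Fin q) ℂ) (j : Fin q),
      (fun i => M i j) = M.mulVec (Pi.single j 1) := by
    intro p q M j
    ext i; simp
  -- step 1 : apply the sketched pseudoinverse bound columnwise
  have step1 : fnorm ((Cᴴ * C)⁻¹ * Cᴴ * (S * R)) ≤ ((1-ε)/(1+ε))⁻¹ * fnorm (S * R) := by
    apply fnorm_le_of_cols _ _ _ (by positivity)
    intro j
    rw [col_of_mul ((Cᴴ * C)⁻¹ * Cᴴ) (S * R) j]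
    exact pinv_bound C _ (by positivity) hSBlow hPdet _
  -- step 2 : the sketch expands columns of R by at most (1+ε)
  have step2 : fnorm (S * R) ≤ (1 + ε) * fnorm R := by
    apply fnorm_le_of_cols _ _ _ (by positivity)
    intro j
    rw [col_of_mul S R j]
    have hmem : (fun k => R k j) ∈
        Submodule.span ℂ (Set.range (A * Bbar)ᵀ ∪ Set.range Bbarᵀ) := by
      have e : (fun k => R k j)
          = (A * Bbar).mulVec (Pi.single j 1) - (Bbar * Mstar).mulVec (Pi.single j 1) := by
        ext k; simp [hR, Matrix.sub_apply]
      rw [e]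
      apply Submodule.sub_mem
      · exact Submodule.span_mono Set.subset_union_left (mulVec_mem_span _ _)
      · rw [← Matrix.mulVec_mulVec]
        exact Submodule.span_mono Set.subset_union_right (mulVec_mem_span _ _)
    exact (hS _ hmem).2
  -- step 3 : fnorm R ≤ (1/(1-ε)) * fnorm X
  have step3 : fnorm R ≤ (1/(1-ε)) * fnorm X := by
    have hCop : ∀ y, nrm2 ((Qᴴ * Bbar).mulVec y) ≤ (1/(1-ε)) * nrm2 y := by
      intro y
      rw [← Matrix.mulVec_mulVec]
      calc nrm2 (Qᴴ.mulVec (Bbar.mulVec y))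
          ≤ 1 * nrm2 (Bbar.mulVec y) :=
            adj_op Q 1 one_pos.le (fun x => by rw [nrm2_iso Q hQ, one_mul]) _
        _ = nrm2 (Bbar.mulVec y) := one_mul _
        _ ≤ (1/(1-ε)) * nrm2 y := hBhigh y
    have hadj : ∀ x, nrm2 ((Qᴴ * Bbar)ᴴ.mulVec x) ≤ (1/(1-ε)) * nrm2 x :=
      adj_op _ _ (by positivity) hCop
    calc fnorm R = fnorm Rᴴ := (fnorm_conjTranspose R).symm
      _ ≤ (1/(1-ε)) * fnorm Xᴴ := by
          rw [hRX, Matrix.conjTranspose_mul]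
          apply fnorm_le_of_cols _ _ _ (by positivity)
          intro j
          rw [col_of_mul (Qᴴ * Bbar)ᴴ Xᴴ j]
          exact hadj _
      _ = (1/(1-ε)) * fnorm X := by rw [fnorm_conjTranspose]
  -- combine everything
  have hXnn : 0 ≤ fnorm X := fnorm_nonneg X
  calc fnorm ((Cᴴ * C)⁻¹ * Cᴴ * (S * (A * Bbar)) - Mstar)
      = fnorm ((Cᴴ * C)⁻¹ * Cᴴ * (S * R)) := by rw [hkey]
    _ ≤ ((1-ε)/(1+ε))⁻¹ * fnorm (S * R) := step1
    _ ≤ ((1-ε)/(1+ε))⁻¹ * ((1 + ε) * fnorm R) :=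
        mul_le_mul_of_nonneg_left step2 (by positivity)
    _ ≤ ((1-ε)/(1+ε))⁻¹ * ((1 + ε) * ((1/(1-ε)) * fnorm X)) := by
        apply mul_le_mul_of_nonneg_left _ (by positivity)
        exact mul_le_mul_of_nonneg_left step3 (by positivity)
    _ = ((1+ε)^2 / (1-ε)^2) * fnorm X := by
        rw [inv_div]
        field_simp
    _ ≤ 2 * (1 + ε) / (1 - ε) ^ 2 * fnorm X := by
        apply mul_le_mul_of_nonneg_right _ hXnn
        apply div_le_div_of_nonneg_right ?_ (by positivity)
        nlinarith
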